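/- Let A be an m×m Hermitian matrix and B an m×n complex matrix, and let U = [[A, B],[B*, 0]]. Then the positive and negative inertia indices of U satisfy i_±(U) = r(B) + i_±(E_B · A · E_B), where E_B = I_m - B·B†. -/

import Mathlib

open Matrix

/-- `X` satisfies the four Penrose equations for `A`, i.e. `X` is the
Moore–Penrose inverse of `A`. -/
def IsMP {m n : Type*} [Fintype m] [Fintype n]
    (A : Matrix m n ℂ) (X : Matrix n m ℂ) : Prop :=
  A * X * A = A ∧ X * A * X = X ∧ (A * X)ᴴ = A * X ∧ (X * A)ᴴ = X * A

/-- the number of positive eigenvalues (with multiplicity) of a Hermitian matrix -/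
noncomputable def iPos {n : Type*} [Fintype n] [DecidableEq n] {A : Matrix n n ℂ}
    (hA : A.IsHermitian) : ℕ := Nat.card {i // 0 < hA.eigenvalues i}

/-- the number of negative eigenvalues (with multiplicity) of a Hermitian matrix -/
noncomputable def iNeg {n : Type*} [Fintype n] [DecidableEq n] {A : Matrix n n ℂ}
    (hA : A.IsHermitian) : ℕ := Nat.card {i // hA.eigenvalues i < 0}

set_option linter.unusedSectionVars false

namespace IA
variable {ι : Type*} [Fintype ι] [DecidableEq ι]

/-- the real quadratic form of a matrix -/
noncomputable def Q (M : Matrix ι ι ℂ) (x : ι → ℂ) : ℝ := (star x ⬝ᵥ M *ᵥ x).re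

lemma Q_spectral {A : Matrix ι ι ℂ} (hA : A.IsHermitian) (x : ι → ℂ) :
    Q A x = ∑ i, hA.eigenvalues i * ‖(star (hA.eigenvectorUnitary : Matrix ι ι ℂ) *ᵥ x) i‖ ^ 2 := by
  set V : Matrix ι ι ℂ := (hA.eigenvectorUnitary : Matrix ι ι ℂ)
  set y := star V *ᵥ x with hy
  have h1 : Q A x = (star y ⬝ᵥ (diagonal (Complex.ofReal ∘ hA.eigenvalues)) *ᵥ y).re := by
    have : star y = star x ᵥ* V := by
      rw [hy, star_mulVec, star_eq_conjTranspose, conjTranspose_conjTranspose]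
    rw [Q]
    conv_lhs => rw [hA.spectral_theorem]
    rw [this, hy]
    rw [← dotProduct_mulVec, mulVec_mulVec, mulVec_mulVec]
    congr 2
  rw [h1, dotProduct_mulVec]
  simp only [dotProduct, vecMul_diagonal, Pi.star_apply, Function.comp_apply, Complex.re_sum]
  congr 1; funext i
  rw [mul_comm (star (y i)) _, mul_assoc]
  rw [show star (y i) * y i = (Complex.normSq (y i) : ℂ) by
    rw [Complex.normSq_eq_conj_mul_self]; rfl]
  simp only [Complex.normSq_eq_norm_sq, ← Complex.ofReal_pow,
    ← Complex.ofReal_mul, Complex.ofReal_re]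

end IA

namespace IA2
open IA
variable {ι : Type*} [Fintype ι] [DecidableEq ι]

/-- inclusion of coordinates indexed by a predicate -/
noncomputable def gmap (p : ι → Prop) [DecidablePred p] : ({i // p i} → ℂ) →ₗ[ℂ] (ι → ℂ) where
  toFun c := fun i => if h : p i then c ⟨i, h⟩ else 0
  map_add' c d := by funext i; by_cases h : p i <;> simp [h]
  map_smul' r c := by funext i; by_cases h : p i <;> simp [h]

lemma gmap_injective (p : ι → Prop) [DecidablePred p] : Function.Injective (gmap (ι := ι) p) := by
  intro c d h
  funext j
  have := congrFun h j.val
  simpa [gmap, j.prop] using this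

lemma exists_subspace {A : Matrix ι ι ℂ} (hA : A.IsHermitian) (p : ι → Prop) [DecidablePred p] :
    ∃ W : Submodule ℂ (ι → ℂ), Module.finrank ℂ W = Fintype.card {i // p i} ∧
      (∀ x ∈ W, ∃ c : ι → ℝ, (∀ i, 0 ≤ c i) ∧ (∀ i, ¬ p i → c i = 0) ∧
        (x ≠ 0 → ∃ i, p i ∧ 0 < c i) ∧ Q A x = ∑ i, hA.eigenvalues i * c i) ∧
      ((∀ i, p i → hA.eigenvalues i ≠ 0) → ∀ x ∈ W, ∃ z, x = A *ᵥ z) := by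
  set V : Matrix ι ι ℂ := (hA.eigenvectorUnitary : Matrix ι ι ℂ) with hV
  have hVs : star V * V = 1 := Unitary.coe_star_mul_self hA.eigenvectorUnitary
  have hVs' : V * star V = 1 := Unitary.coe_mul_star_self hA.eigenvectorUnitary
  have hVinj : Function.Injective (fun x : ι → ℂ => V *ᵥ x) := by
    intro a b h
    have := congrArg (fun z => star V *ᵥ z) h
    simpa [mulVec_mulVec, hVs] using this
  set f : ({i // p i} → ℂ) →ₗ[ℂ] (ι → ℂ) := V.mulVecLin ∘ₗ gmap p with hf
  have hfinj : Function.Injective f := by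
    intro a b h
    exact gmap_injective p (hVinj (by simpa [hf, mulVecLin_apply] using h))
  refine ⟨LinearMap.range f, ?_, ?_, ?_⟩
  · rw [LinearMap.finrank_range_of_inj hfinj, Module.finrank_fintype_fun_eq_card]
  · rintro x ⟨c, rfl⟩
    have hx : (f c : ι → ℂ) = V *ᵥ gmap p c := rfl
    have hy : star V *ᵥ (f c : ι → ℂ) = gmap p c := by
      rw [hx, mulVec_mulVec, hVs, one_mulVec]
    refine ⟨fun i => ‖gmap p c i‖ ^ 2, fun i => by positivity, ?_, ?_, ?_⟩
    · intro i hi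
      simp [gmap, hi]
    · intro hx0
      have hc0 : gmap p c ≠ 0 := by
        intro h
        exact hx0 (by simp [hx, h])
      obtain ⟨i, hi⟩ := Function.ne_iff.mp hc0
      have hpi : p i := by
        by_contra hpi
        exact hi (by simp [gmap, hpi])
      exact ⟨i, hpi, by have := norm_pos_iff.mpr hi; positivity⟩
    · rw [Q_spectral hA, hy]
  · rintro hlam x ⟨c, rfl⟩
    obtain ⟨c', hc'⟩ : ∃ c', c' = gmap p (fun j => c j / (hA.eigenvalues j.val : ℂ)) := ⟨_, rfl⟩
    refine ⟨V *ᵥ c', ?_⟩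
    have key : A *ᵥ (V *ᵥ c') = V *ᵥ (fun i => (hA.eigenvalues i : ℂ) * c' i) := by
      conv_lhs => rw [hA.spectral_theorem]
      rw [Unitary.conjStarAlgAut_apply, ← hV, ← mulVec_mulVec, ← mulVec_mulVec, mulVec_mulVec c', hVs, one_mulVec]
      refine congrArg (fun w => V *ᵥ w) ?_
      funext i
      simp [mulVec_diagonal]
    rw [key]
    show V *ᵥ gmap p c = _
    refine congrArg (fun w => V *ᵥ w) ?_
    funext i
    subst hc'
    by_cases h : p i
    · have hne : (hA.eigenvalues i : ℂ) ≠ 0 := Complex.ofReal_ne_zero.mpr (hlam i h)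
      simp only [gmap, LinearMap.coe_mk, AddHom.coe_mk, dif_pos h]
      field_simp
    · simp [gmap, h]

end IA2
namespace IA3
open IA IA2 Module
variable {ι : Type*} [Fintype ι] [DecidableEq ι] {A : Matrix ι ι ℂ}

noncomputable def iPos' {A : Matrix ι ι ℂ} (hA : A.IsHermitian) : ℕ :=
  Nat.card {i // 0 < hA.eigenvalues i}
noncomputable def iNeg' {A : Matrix ι ι ℂ} (hA : A.IsHermitian) : ℕ :=
  Nat.card {i // hA.eigenvalues i < 0}

lemma iPos'_eq (hA : A.IsHermitian) :
    iPos' hA = Fintype.card {i // 0 < hA.eigenvalues i} := Nat.card_eq_fintype_card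
lemma iNeg'_eq (hA : A.IsHermitian) :
    iNeg' hA = Fintype.card {i // hA.eigenvalues i < 0} := Nat.card_eq_fintype_card

lemma iPos'_le (hA : A.IsHermitian) : iPos' hA ≤ Fintype.card ι := by
  rw [iPos'_eq]; exact Fintype.card_subtype_le _
lemma iNeg'_le (hA : A.IsHermitian) : iNeg' hA ≤ Fintype.card ι := by
  rw [iNeg'_eq]; exact Fintype.card_subtype_le _

lemma exists_posdef (hA : A.IsHermitian) :
    ∃ W : Submodule ℂ (ι → ℂ), finrank ℂ W = iPos' hA ∧
      (∀ x ∈ W, x ≠ 0 → 0 < Q A x) ∧ (∀ x ∈ W, ∃ z, x = A *ᵥ z) := by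
  obtain ⟨W, hd, hc, hr⟩ := exists_subspace hA (fun i => 0 < hA.eigenvalues i)
  refine ⟨W, by rw [hd, iPos'_eq], ?_, hr fun i hi => ne_of_gt hi⟩
  intro x hx hx0
  obtain ⟨c, hc0, hcsupp, hcpos, hQ⟩ := hc x hx
  rw [hQ]
  refine Finset.sum_pos' (fun i _ => ?_) ?_
  · by_cases h : 0 < hA.eigenvalues i
    · exact mul_nonneg h.le (hc0 i)
    · simp [hcsupp i h]
  · obtain ⟨i, hpi, hci⟩ := hcpos hx0
    exact ⟨i, Finset.mem_univ i, mul_pos hpi hci⟩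

lemma exists_negdef (hA : A.IsHermitian) :
    ∃ W : Submodule ℂ (ι → ℂ), finrank ℂ W = iNeg' hA ∧
      (∀ x ∈ W, x ≠ 0 → Q A x < 0) ∧ (∀ x ∈ W, ∃ z, x = A *ᵥ z) := by
  obtain ⟨W, hd, hc, hr⟩ := exists_subspace hA (fun i => hA.eigenvalues i < 0)
  refine ⟨W, by rw [hd, iNeg'_eq], ?_, hr fun i hi => ne_of_lt hi⟩
  intro x hx hx0
  obtain ⟨c, hc0, hcsupp, hcpos, hQ⟩ := hc x hx
  rw [hQ]
  have : 0 < ∑ i, -(hA.eigenvalues i * c i) := by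
    refine Finset.sum_pos' (fun i _ => ?_) ?_
    · by_cases h : hA.eigenvalues i < 0
      · simpa using mul_nonneg (neg_nonneg.mpr h.le) (hc0 i)
      · simp [hcsupp i h]
    · obtain ⟨i, hpi, hci⟩ := hcpos hx0
      exact ⟨i, Finset.mem_univ i, by nlinarith⟩
  rw [Finset.sum_neg_distrib] at this
  linarith

lemma exists_nonpos (hA : A.IsHermitian) :
    ∃ W : Submodule ℂ (ι → ℂ), finrank ℂ W = Fintype.card ι - iPos' hA ∧
      (∀ x ∈ W, Q A x ≤ 0) := by
  obtain ⟨W, hd, hc, -⟩ := exists_subspace hA (fun i => ¬ 0 < hA.eigenvalues i)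
  refine ⟨W, by rw [hd, Fintype.card_subtype_compl, ← iPos'_eq], ?_⟩
  intro x hx
  obtain ⟨c, hc0, hcsupp, -, hQ⟩ := hc x hx
  rw [hQ]
  refine Finset.sum_nonpos fun i _ => ?_
  by_cases h : 0 < hA.eigenvalues i
  · simp [hcsupp i (by simpa using h)]
  · exact mul_nonpos_of_nonpos_of_nonneg (not_lt.mp h) (hc0 i)

lemma exists_nonneg (hA : A.IsHermitian) :
    ∃ W : Submodule ℂ (ι → ℂ), finrank ℂ W = Fintype.card ι - iNeg' hA ∧
      (∀ x ∈ W, 0 ≤ Q A x) := by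
  obtain ⟨W, hd, hc, -⟩ := exists_subspace hA (fun i => ¬ hA.eigenvalues i < 0)
  refine ⟨W, by rw [hd, Fintype.card_subtype_compl, ← iNeg'_eq], ?_⟩
  intro x hx
  obtain ⟨c, hc0, hcsupp, -, hQ⟩ := hc x hx
  rw [hQ]
  refine Finset.sum_nonneg fun i _ => ?_
  by_cases h : hA.eigenvalues i < 0
  · simp [hcsupp i (by simpa using h)]
  · exact mul_nonneg (not_lt.mp h) (hc0 i)

lemma exists_common {W1 W2 : Submodule ℂ (ι → ℂ)}
    (h : Fintype.card ι < finrank ℂ W1 + finrank ℂ W2) :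
    ∃ x : ι → ℂ, x ≠ 0 ∧ x ∈ W1 ∧ x ∈ W2 := by
  have hsup : finrank ℂ ↥(W1 ⊔ W2) ≤ Fintype.card ι := by
    have := Submodule.finrank_le (W1 ⊔ W2)
    rwa [Module.finrank_fintype_fun_eq_card] at this
  have hinf : 0 < finrank ℂ ↥(W1 ⊓ W2) := by
    have := Submodule.finrank_sup_add_finrank_inf_eq W1 W2
    omega
  have : W1 ⊓ W2 ≠ ⊥ := by
    intro hbot
    rw [hbot] at hinf
    simp at hinf
  obtain ⟨x, hx, hx0⟩ := Submodule.exists_mem_ne_zero_of_ne_bot this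
  exact ⟨x, hx0, hx.1, hx.2⟩

lemma posdef_le (hA : A.IsHermitian) (W : Submodule ℂ (ι → ℂ))
    (hW : ∀ x ∈ W, x ≠ 0 → 0 < Q A x) : finrank ℂ W ≤ iPos' hA := by
  by_contra hcon
  obtain ⟨W2, hd2, hn2⟩ := exists_nonpos hA
  have := iPos'_le hA
  obtain ⟨x, hx0, hx1, hx2⟩ := exists_common (W1 := W) (W2 := W2) (by omega)
  exact absurd (hn2 x hx2) (not_le.mpr (hW x hx1 hx0))

lemma negdef_le (hA : A.IsHermitian) (W : Submodule ℂ (ι → ℂ))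
    (hW : ∀ x ∈ W, x ≠ 0 → Q A x < 0) : finrank ℂ W ≤ iNeg' hA := by
  by_contra hcon
  obtain ⟨W2, hd2, hn2⟩ := exists_nonneg hA
  have := iNeg'_le hA
  obtain ⟨x, hx0, hx1, hx2⟩ := exists_common (W1 := W) (W2 := W2) (by omega)
  exact absurd (hn2 x hx2) (not_le.mpr (hW x hx1 hx0))

end IA3
namespace IA4
open IA IA2 IA3 Module
variable {ι : Type*} [Fintype ι] [DecidableEq ι]

lemma Q_congr (S M : Matrix ι ι ℂ) (x : ι → ℂ) :
    Q (S * M * Sᴴ) x = Q M (Sᴴ *ᵥ x) := by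
  unfold Q
  congr 1
  rw [star_mulVec, conjTranspose_conjTranspose, ← dotProduct_mulVec,
    mulVec_mulVec, mulVec_mulVec]

lemma inertia_congr {A B : Matrix ι ι ℂ} (S : Matrix ι ι ℂ) [hS : Invertible S]
    (hAB : B = S * A * Sᴴ) (hA : A.IsHermitian) (hB : B.IsHermitian) :
    iPos' hB = iPos' hA ∧ iNeg' hB = iNeg' hA := by
  have : Invertible Sᴴ := Matrix.invertibleConjTranspose S
  let e : (ι → ℂ) ≃ₗ[ℂ] (ι → ℂ) := Matrix.toLinearEquiv' Sᴴ this
  have he : ∀ x, e x = Sᴴ *ᵥ x := fun x => rfl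
  have hQ : ∀ x, Q B x = Q A (e x) := by
    intro x; rw [hAB, he, Q_congr]
  constructor
  · refine le_antisymm ?_ ?_
    · obtain ⟨W, hd, hp, -⟩ := exists_posdef hB
      have : finrank ℂ (Submodule.map (e : (ι → ℂ) →ₗ[ℂ] (ι → ℂ)) W) ≤ iPos' hA := by
        refine posdef_le hA _ ?_
        rintro x ⟨y, hy, rfl⟩ hx0
        have hy0 : y ≠ 0 := by rintro rfl; simp at hx0
        have := hp y hy hy0
        rwa [hQ] at this
      rwa [LinearEquiv.finrank_map_eq, hd] at this
    · obtain ⟨W, hd, hp, -⟩ := exists_posdef hA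
      have : finrank ℂ (Submodule.map (e.symm : (ι → ℂ) →ₗ[ℂ] (ι → ℂ)) W) ≤ iPos' hB := by
        refine posdef_le hB _ ?_
        rintro x ⟨y, hy, rfl⟩ hx0
        have hy0 : y ≠ 0 := by rintro rfl; simp at hx0
        have hQx := hp y hy hy0
        rw [hQ]
        simpa using hQx
      rwa [LinearEquiv.finrank_map_eq, hd] at this
  · refine le_antisymm ?_ ?_
    · obtain ⟨W, hd, hp, -⟩ := exists_negdef hB
      have : finrank ℂ (Submodule.map (e : (ι → ℂ) →ₗ[ℂ] (ι → ℂ)) W) ≤ iNeg' hA := by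
        refine negdef_le hA _ ?_
        rintro x ⟨y, hy, rfl⟩ hx0
        have hy0 : y ≠ 0 := by rintro rfl; simp at hx0
        have := hp y hy hy0
        rwa [hQ] at this
      rwa [LinearEquiv.finrank_map_eq, hd] at this
    · obtain ⟨W, hd, hp, -⟩ := exists_negdef hA
      have : finrank ℂ (Submodule.map (e.symm : (ι → ℂ) →ₗ[ℂ] (ι → ℂ)) W) ≤ iNeg' hB := by
        refine negdef_le hB _ ?_
        rintro x ⟨y, hy, rfl⟩ hx0
        have hy0 : y ≠ 0 := by rintro rfl; simp at hx0
        have hQx := hp y hy hy0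
        rw [hQ]
        simpa using hQx
      rwa [LinearEquiv.finrank_map_eq, hd] at this

end IA4
namespace IA5
open IA IA2 IA3 IA4 Module
variable {m n : ℕ}

/-- embedding of a product of subspaces into the sum coordinates -/
noncomputable def emb (W1 : Submodule ℂ (Fin m → ℂ)) (W2 : Submodule ℂ (Fin n → ℂ))
    (B' : Matrix (Fin m) (Fin n) ℂ) : (↥W1 × ↥W2) →ₗ[ℂ] (Fin m ⊕ Fin n → ℂ) where
  toFun p := Sum.elim ((p.1 : Fin m → ℂ) + B' *ᵥ (p.2 : Fin n → ℂ)) (p.2 : Fin n → ℂ)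
  map_add' p q := by
    funext i
    cases i <;> simp [Matrix.mulVec_add] <;> ring
  map_smul' r p := by
    funext i
    cases i <;> simp [Matrix.mulVec_smul] <;> ring

lemma emb_inj (W1 : Submodule ℂ (Fin m → ℂ)) (W2 : Submodule ℂ (Fin n → ℂ))
    (B' : Matrix (Fin m) (Fin n) ℂ) : Function.Injective (emb W1 W2 B') := by
  rintro ⟨a, b⟩ ⟨a', b'⟩ h
  have hb : (b : Fin n → ℂ) = b' := funext fun i => congrFun h (Sum.inr i)
  have ha : (a : Fin m → ℂ) = a' := by
    have := fun i => congrFun h (Sum.inl i)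
    have h2 : (a : Fin m → ℂ) + B' *ᵥ (b : Fin n → ℂ) = a' + B' *ᵥ (b' : Fin n → ℂ) :=
      funext this
    rw [hb] at h2
    exact add_right_cancel h2
  exact Prod.ext (Subtype.ext ha) (Subtype.ext hb)

lemma finrank_emb (W1 : Submodule ℂ (Fin m → ℂ)) (W2 : Submodule ℂ (Fin n → ℂ))
    (B' : Matrix (Fin m) (Fin n) ℂ) :
    finrank ℂ ↥(LinearMap.range (emb W1 W2 B')) = finrank ℂ W1 + finrank ℂ W2 := by
  rw [LinearMap.finrank_range_of_inj (emb_inj W1 W2 B'), Module.finrank_prod]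

lemma mem_emb {W1 : Submodule ℂ (Fin m → ℂ)} {W2 : Submodule ℂ (Fin n → ℂ)}
    {B' : Matrix (Fin m) (Fin n) ℂ} {x : Fin m ⊕ Fin n → ℂ}
    (hx : x ∈ LinearMap.range (emb W1 W2 B')) :
    ∃ a ∈ W1, ∃ b ∈ W2, x = Sum.elim (a + B' *ᵥ b) b := by
  obtain ⟨⟨a, b⟩, rfl⟩ := hx
  exact ⟨a, a.2, b, b.2, rfl⟩

/-- positivity of the standard Hermitian norm term -/
lemma re_star_dot {τ : Type*} [Fintype τ] (w : τ → ℂ) :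
    0 ≤ (star w ⬝ᵥ w).re ∧ (w ≠ 0 → 0 < (star w ⬝ᵥ w).re) := by
  have hsum : (star w ⬝ᵥ w).re = ∑ i, Complex.normSq (w i) := by
    simp only [dotProduct, Pi.star_apply, Complex.re_sum]
    congr 1; funext i
    rw [show (star (w i)) * w i = (Complex.normSq (w i) : ℂ) by
      rw [Complex.normSq_eq_conj_mul_self]; rfl]
    simp
  constructor
  · rw [hsum]; exact Finset.sum_nonneg fun i _ => Complex.normSq_nonneg _
  · intro hw
    rw [hsum]
    obtain ⟨i, hi⟩ := Function.ne_iff.mp hw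
    exact Finset.sum_pos' (fun i _ => Complex.normSq_nonneg _)
      ⟨i, Finset.mem_univ i, Complex.normSq_pos.mpr hi⟩

lemma Q_zero {ι : Type*} [Fintype ι] (M : Matrix ι ι ℂ) : Q M 0 = 0 := by
  simp [Q]

/-- quadratic form of the block matrix -/
lemma Q_block (C : Matrix (Fin m) (Fin m) ℂ) (B : Matrix (Fin m) (Fin n) ℂ)
    (v : Fin m → ℂ) (y : Fin n → ℂ) :
    Q (Matrix.fromBlocks C B Bᴴ 0) (Sum.elim v y) =
      Q C v + 2 * (star v ⬝ᵥ B *ᵥ y).re := by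
  have hsplit : star (Sum.elim v y) ⬝ᵥ (Matrix.fromBlocks C B Bᴴ 0) *ᵥ Sum.elim v y =
      star v ⬝ᵥ (C *ᵥ v + B *ᵥ y) + star y ⬝ᵥ (Bᴴ *ᵥ v + 0) := by
    rw [Matrix.fromBlocks_mulVec, Matrix.dotProduct_block]
    simp only [Matrix.zero_mulVec, add_zero]
    congr 1 <;> congr 1 <;> funext i <;> simp
  have hconj : star y ⬝ᵥ Bᴴ *ᵥ v = star (star v ⬝ᵥ B *ᵥ y) := by
    rw [Matrix.star_dotProduct, Matrix.star_mulVec,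
      Matrix.conjTranspose_conjTranspose, ← Matrix.dotProduct_mulVec]
  rw [Q, hsplit]
  simp only [dotProduct_add, Matrix.mulVec_zero, add_zero, Complex.add_re]
  rw [hconj, Complex.star_def, Complex.conj_re, Q]
  ring

end IA5
namespace IA6
open IA IA2 IA3 IA4 IA5 Module
variable {m n : ℕ}

lemma hCBv_aux {C : Matrix (Fin m) (Fin m) ℂ} {B : Matrix (Fin m) (Fin n) ℂ}
    (hCB : C * B = 0) (w : Fin n → ℂ) : C *ᵥ (B *ᵥ w) = 0 := by
  rw [Matrix.mulVec_mulVec, hCB, Matrix.zero_mulVec]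

lemma cross_aux {C : Matrix (Fin m) (Fin m) ℂ} (hC : C.IsHermitian)
    {B : Matrix (Fin m) (Fin n) ℂ} (hCB : C * B = 0) (z : Fin m → ℂ) (w : Fin n → ℂ) :
    star (C *ᵥ z) ⬝ᵥ B *ᵥ w = 0 := by
  rw [Matrix.star_mulVec, hC.eq, ← Matrix.dotProduct_mulVec, hCBv_aux hCB,
    dotProduct_zero]

lemma vC_aux {C : Matrix (Fin m) (Fin m) ℂ} (hC : C.IsHermitian)
    {B : Matrix (Fin m) (Fin n) ℂ} (hCB : C * B = 0) (w : Fin n → ℂ) (a : Fin m → ℂ) :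
    star (B *ᵥ w) ⬝ᵥ C *ᵥ a = 0 := by
  have h3 : star (Cᴴ *ᵥ (B *ᵥ w)) = star (B *ᵥ w) ᵥ* C := by
    rw [Matrix.star_mulVec, Matrix.conjTranspose_conjTranspose]
  rw [Matrix.dotProduct_mulVec, ← h3, hC.eq, hCBv_aux hCB, star_zero,
    zero_dotProduct]

lemma QC_shift {C : Matrix (Fin m) (Fin m) ℂ} (hC : C.IsHermitian)
    {B : Matrix (Fin m) (Fin n) ℂ} (hCB : C * B = 0) (z : Fin m → ℂ) (b : Fin n → ℂ) :
    Q C (C *ᵥ z + B *ᵥ b) = Q C (C *ᵥ z) := by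
  unfold Q
  rw [Matrix.mulVec_add, hCBv_aux hCB, add_zero, star_add, add_dotProduct,
    vC_aux hC hCB]
  simp

lemma cross_shift {C : Matrix (Fin m) (Fin m) ℂ} (hC : C.IsHermitian)
    {B : Matrix (Fin m) (Fin n) ℂ} (hCB : C * B = 0) (z : Fin m → ℂ) (b b' : Fin n → ℂ) :
    star (C *ᵥ z + B *ᵥ b) ⬝ᵥ B *ᵥ b' = star (B *ᵥ b) ⬝ᵥ B *ᵥ b' := by
  rw [star_add, add_dotProduct, cross_aux hC hCB, zero_add]

lemma Q_block_key (C : Matrix (Fin m) (Fin m) ℂ) (hC : C.IsHermitian)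
    (B : Matrix (Fin m) (Fin n) ℂ) (hCB : C * B = 0) (z : Fin m → ℂ) (b : Fin n → ℂ) :
    Q (Matrix.fromBlocks C B Bᴴ 0) (Sum.elim (C *ᵥ z + B *ᵥ b) b) =
      Q C (C *ᵥ z) + 2 * (star (B *ᵥ b) ⬝ᵥ (B *ᵥ b)).re := by
  rw [Q_block, QC_shift hC hCB, cross_shift hC hCB]

lemma Q_block_key_neg (C : Matrix (Fin m) (Fin m) ℂ) (hC : C.IsHermitian)
    (B : Matrix (Fin m) (Fin n) ℂ) (hCB : C * B = 0) (z : Fin m → ℂ) (b : Fin n → ℂ) :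
    Q (Matrix.fromBlocks C B Bᴴ 0) (Sum.elim (C *ᵥ z + (-B) *ᵥ b) b) =
      Q C (C *ᵥ z) - 2 * (star (B *ᵥ b) ⬝ᵥ (B *ᵥ b)).re := by
  have h : (-B) *ᵥ b = B *ᵥ (-b) := by rw [Matrix.neg_mulVec, Matrix.mulVec_neg]
  rw [h, Q_block, QC_shift hC hCB, cross_shift hC hCB]
  have h2 : star (B *ᵥ (-b)) ⬝ᵥ B *ᵥ b = -(star (B *ᵥ b) ⬝ᵥ B *ᵥ b) := by
    rw [Matrix.mulVec_neg, star_neg, neg_dotProduct]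
  rw [h2]
  simp only [Complex.neg_re]
  ring

lemma block_inertia (C : Matrix (Fin m) (Fin m) ℂ) (hC : C.IsHermitian)
    (B : Matrix (Fin m) (Fin n) ℂ) (hCB : C * B = 0)
    (hW : (Matrix.fromBlocks C B Bᴴ (0 : Matrix (Fin n) (Fin n) ℂ)).IsHermitian) :
    iPos' hW = B.rank + iPos' hC ∧ iNeg' hW = B.rank + iNeg' hC := by
  have hcard : Fintype.card (Fin m ⊕ Fin n) = m + n := by simp
  have hm : iPos' hC ≤ m := by have := iPos'_le hC; simpa using this
  have hm' : iNeg' hC ≤ m := by have := iNeg'_le hC; simpa using this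
  have hr : B.rank ≤ n := B.rank_le_width
  -- the "column space of Bᴴ" subspace
  set W2 : Submodule ℂ (Fin n → ℂ) := LinearMap.range Bᴴ.mulVecLin with hW2def
  have hW2 : finrank ℂ W2 = B.rank := by
    open ComplexOrder in
    rw [hW2def, show finrank ℂ ↥(LinearMap.range Bᴴ.mulVecLin) = Bᴴ.rank from rfl,
      Matrix.rank_conjTranspose]
  have hker0 : ∀ y ∈ W2, B *ᵥ y = 0 → y = 0 := by
    rintro y ⟨w, rfl⟩ h0
    by_contra hy
    have hpos := (re_star_dot (Bᴴ.mulVecLin w)).2 hy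
    have : star (Bᴴ.mulVecLin w) ⬝ᵥ (Bᴴ.mulVecLin w) = 0 := by
      show star (Bᴴ.mulVecLin w) ⬝ᵥ Bᴴ *ᵥ w = 0
      rw [Matrix.dotProduct_mulVec, ← Matrix.star_mulVec, h0, star_zero,
        zero_dotProduct]
    rw [this] at hpos
    simp at hpos
  have hBy_pos : ∀ y ∈ W2, y ≠ 0 → 0 < (star (B *ᵥ y) ⬝ᵥ (B *ᵥ y)).re := by
    intro y hy hy0
    refine (re_star_dot (B *ᵥ y)).2 fun h0 => hy0 (hker0 y hy h0)
  -- kernel of B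
  set K : Submodule ℂ (Fin n → ℂ) := LinearMap.ker B.mulVecLin with hKdef
  have hK : finrank ℂ K = n - B.rank := by
    have h := LinearMap.finrank_range_add_finrank_ker B.mulVecLin
    rw [Module.finrank_fintype_fun_eq_card, Fintype.card_fin,
      show finrank ℂ ↥(LinearMap.range B.mulVecLin) = B.rank from rfl] at h
    rw [hKdef]
    omega
  constructor
  · -- positive index
    refine le_antisymm ?_ ?_
    · -- iPos' hW ≤ B.rank + iPos' hC
      obtain ⟨W1', hd1', hn1'⟩ := exists_nonpos hC
      have hnp : ∀ x ∈ LinearMap.range (emb W1' K 0), Q (Matrix.fromBlocks C B Bᴴ 0) x ≤ 0 := by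
        intro x hx
        obtain ⟨a, ha, b, hb, rfl⟩ := mem_emb hx
        rw [show a + (0 : Matrix (Fin m) (Fin n) ℂ) *ᵥ b = a by
          rw [Matrix.zero_mulVec, add_zero], Q_block]
        have hb0 : B *ᵥ b = 0 := hb
        rw [hb0, dotProduct_zero]
        simpa using hn1' a ha
      obtain ⟨Wmax, hdmax, hpmax, -⟩ := exists_posdef hW
      have hnot : ¬ (Fintype.card (Fin m ⊕ Fin n) <
          finrank ℂ Wmax + finrank ℂ (LinearMap.range (emb W1' K 0))) := by
        intro hlt
        obtain ⟨x, hx0, hx1, hx2⟩ := exists_common hlt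
        exact absurd (hnp x hx2) (not_le.mpr (hpmax x hx1 hx0))
      rw [hcard, hdmax, finrank_emb, hd1', hK, Fintype.card_fin] at hnot
      omega
    · -- B.rank + iPos' hC ≤ iPos' hW
      obtain ⟨W1, hd1, hp1, hr1⟩ := exists_posdef hC
      have hposdef : ∀ x ∈ LinearMap.range (emb W1 W2 B), x ≠ 0 →
          0 < Q (Matrix.fromBlocks C B Bᴴ 0) x := by
        intro x hx hx0
        obtain ⟨a, ha, b, hb, rfl⟩ := mem_emb hx
        obtain ⟨z, hz⟩ := hr1 a ha
        rw [hz, Q_block_key C hC B hCB z b, ← hz]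
        have hab : ¬ (a = 0 ∧ b = 0) := by
          rintro ⟨rfl, rfl⟩
          exact hx0 (by funext i; cases i <;> simp)
        by_cases hbz : b = 0
        · have haz : a ≠ 0 := fun h => hab ⟨h, hbz⟩
          have h1 := hp1 a ha haz
          have h2 : 0 ≤ (star (B *ᵥ b) ⬝ᵥ (B *ᵥ b)).re := (re_star_dot _).1
          linarith
        · have h1 : 0 ≤ Q C a := by
            by_cases haz : a = 0
            · rw [haz, Q_zero]
            · exact (hp1 a ha haz).le
          have h2 := hBy_pos b hb hbz
          linarith
      have := posdef_le hW _ hposdef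
      rw [finrank_emb, hd1, hW2] at this
      omega
  · -- negative index
    refine le_antisymm ?_ ?_
    · obtain ⟨W1', hd1', hn1'⟩ := exists_nonneg hC
      have hnp : ∀ x ∈ LinearMap.range (emb W1' K 0), 0 ≤ Q (Matrix.fromBlocks C B Bᴴ 0) x := by
        intro x hx
        obtain ⟨a, ha, b, hb, rfl⟩ := mem_emb hx
        rw [show a + (0 : Matrix (Fin m) (Fin n) ℂ) *ᵥ b = a by
          rw [Matrix.zero_mulVec, add_zero], Q_block]
        have hb0 : B *ᵥ b = 0 := hb
        rw [hb0, dotProduct_zero]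
        simpa using hn1' a ha
      obtain ⟨Wmax, hdmax, hpmax, -⟩ := exists_negdef hW
      have hnot : ¬ (Fintype.card (Fin m ⊕ Fin n) <
          finrank ℂ Wmax + finrank ℂ (LinearMap.range (emb W1' K 0))) := by
        intro hlt
        obtain ⟨x, hx0, hx1, hx2⟩ := exists_common hlt
        exact absurd (hnp x hx2) (not_le.mpr (hpmax x hx1 hx0))
      rw [hcard, hdmax, finrank_emb, hd1', hK, Fintype.card_fin] at hnot
      omega
    · obtain ⟨W1, hd1, hp1, hr1⟩ := exists_negdef hC
      have hnegdef : ∀ x ∈ LinearMap.range (emb W1 W2 (-B)), x ≠ 0 →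
          Q (Matrix.fromBlocks C B Bᴴ 0) x < 0 := by
        intro x hx hx0
        obtain ⟨a, ha, b, hb, rfl⟩ := mem_emb hx
        obtain ⟨z, hz⟩ := hr1 a ha
        rw [hz, Q_block_key_neg C hC B hCB z b, ← hz]
        have hab : ¬ (a = 0 ∧ b = 0) := by
          rintro ⟨rfl, rfl⟩
          refine hx0 ?_
          funext i
          cases i <;> simp
        by_cases hbz : b = 0
        · have haz : a ≠ 0 := fun h => hab ⟨h, hbz⟩
          have h1 := hp1 a ha haz
          have h2 : 0 ≤ (star (B *ᵥ b) ⬝ᵥ (B *ᵥ b)).re := (re_star_dot _).1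
          have h3 : B *ᵥ b = 0 := by rw [hbz, Matrix.mulVec_zero]
          rw [h3] at h2 ⊢
          simpa using h1
        · have h1 : Q C a ≤ 0 := by
            by_cases haz : a = 0
            · rw [haz, Q_zero]
            · exact (hp1 a ha haz).le
          have h2 := hBy_pos b hb hbz
          linarith
      have := negdef_le hW _ hnegdef
      rw [finrank_emb, hd1, hW2] at this
      omega

end IA6
namespace IA7
open IA3 IA4 IA6 Module

theorem stmt2' (m n : ℕ) (A : Matrix (Fin m) (Fin m) ℂ) (hA : A.IsHermitian)
    (B : Matrix (Fin m) (Fin n) ℂ) (Bd : Matrix (Fin n) (Fin m) ℂ)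
    (h1 : B * Bd * B = B) (h3 : (B * Bd)ᴴ = B * Bd)
    (hU : (Matrix.fromBlocks A B Bᴴ (0 : Matrix (Fin n) (Fin n) ℂ)).IsHermitian)
    (hE : ((1 - B * Bd) * A * (1 - B * Bd)).IsHermitian) :
    iPos' hU = B.rank + iPos' hE ∧ iNeg' hU = B.rank + iNeg' hE := by
  have hAh : Aᴴ = A := hA
  set P : Matrix (Fin m) (Fin m) ℂ := B * Bd with hPdef
  have hP : Pᴴ = P := h3
  have hPB : P * B = B := h1
  have hCB : ((1 - P) * A * (1 - P)) * B = 0 := by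
    have hEB : (1 - P) * B = 0 := by
      rw [Matrix.sub_mul, Matrix.one_mul, hPB, sub_self]
    calc ((1 - P) * A * (1 - P)) * B = (1 - P) * A * ((1 - P) * B) :=
          Matrix.mul_assoc ((1 - P) * A) (1 - P) B
      _ = 0 := by rw [hEB, Matrix.mul_zero]
  have hU1 : (Matrix.fromBlocks ((1 - P) * A * (1 - P)) B Bᴴ
      (0 : Matrix (Fin n) (Fin n) ℂ)).IsHermitian := by
    show _ᴴ = _
    rw [Matrix.fromBlocks_conjTranspose, Matrix.conjTranspose_conjTranspose, hE.eq,
      Matrix.conjTranspose_zero]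
  -- the congruence matrix
  set Z : Matrix (Fin m) (Fin n) ℂ := ((2⁻¹ : ℂ) • (P * A) - A) * Bdᴴ with hZdef
  set S : Matrix (Fin m ⊕ Fin n) (Fin m ⊕ Fin n) ℂ := Matrix.fromBlocks 1 Z 0 1 with hSdef
  have hSmul : S * Matrix.fromBlocks 1 (-Z) 0 1 = 1 := by
    rw [hSdef, Matrix.fromBlocks_multiply]
    simp [Matrix.fromBlocks_one]
  have hSmul' : Matrix.fromBlocks 1 (-Z) 0 1 * S = 1 := by
    rw [hSdef, Matrix.fromBlocks_multiply]
    simp [Matrix.fromBlocks_one]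
  letI hSinv : Invertible S := ⟨Matrix.fromBlocks 1 (-Z) 0 1, hSmul', hSmul⟩
  have hBdB : Bdᴴ * Bᴴ = P := by
    rw [← Matrix.conjTranspose_mul]
    exact h3
  have hZBH : Z * Bᴴ = ((2⁻¹ : ℂ) • (P * A) - A) * P := by
    rw [hZdef, Matrix.mul_assoc, hBdB]
  have hZH : Zᴴ = Bd * ((2⁻¹ : ℂ) • (A * P) - A) := by
    rw [hZdef, Matrix.conjTranspose_mul, Matrix.conjTranspose_conjTranspose]
    congr 1
    rw [Matrix.conjTranspose_sub, Matrix.conjTranspose_smul, Matrix.conjTranspose_mul,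
      hP, hAh]
    norm_num
  have hBZH : B * Zᴴ = P * ((2⁻¹ : ℂ) • (A * P) - A) := by
    rw [hZH, ← Matrix.mul_assoc]
  have hcong : Matrix.fromBlocks ((1 - P) * A * (1 - P)) B Bᴴ
      (0 : Matrix (Fin n) (Fin n) ℂ) =
      S * (Matrix.fromBlocks A B Bᴴ (0 : Matrix (Fin n) (Fin n) ℂ)) * Sᴴ := by
    rw [hSdef, Matrix.fromBlocks_conjTranspose, Matrix.fromBlocks_multiply,
      Matrix.fromBlocks_multiply]
    simp only [Matrix.one_mul, Matrix.mul_one, Matrix.mul_zero, Matrix.zero_mul,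
      Matrix.conjTranspose_one, Matrix.conjTranspose_zero, add_zero, zero_add,
      Matrix.mul_one]
    rw [Matrix.fromBlocks_inj]
    refine ⟨?_, rfl, rfl, rfl⟩
    rw [hZBH, hBZH]
    simp only [Matrix.sub_mul, Matrix.mul_sub, Matrix.smul_mul, Matrix.mul_smul,
      Matrix.mul_one, Matrix.one_mul, mul_assoc]
    module
  have hcongr := inertia_congr S hcong hU hU1
  have hblock := block_inertia ((1 - P) * A * (1 - P)) hE B hCB hU1
  exact ⟨by rw [← hcongr.1, hblock.1], by rw [← hcongr.2, hblock.2]⟩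

end IA7

theorem stmt2 (m n : ℕ) (A : Matrix (Fin m) (Fin m) ℂ) (hA : A.IsHermitian)
    (B : Matrix (Fin m) (Fin n) ℂ) (Bd : Matrix (Fin n) (Fin m) ℂ) (hBd : IsMP B Bd)
    (hU : (fromBlocks A B Bᴴ (0 : Matrix (Fin n) (Fin n) ℂ)).IsHermitian)
    (hE : ((1 - B * Bd) * A * (1 - B * Bd)).IsHermitian) :
    iPos hU = B.rank + iPos hE ∧ iNeg hU = B.rank + iNeg hE := by
  obtain ⟨h1, h2, h3, h4⟩ := hBd
  exact IA7.stmt2' m n A hA B Bd h1 h3 hU hE
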